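/- Let λ > 0, Δ > 0, α = e^{−λΔ}, w̄, J ≥ 0, K ≥ 1, and let (η_k) satisfy η_{k+1} ≤ α η_k + (w̄/λ)(1−α) + J with η_k ≥ 0. Then with η_∞ := w̄/λ + J/(1−α), the time-averaged bound holds: (1/(KΔ)) Σ_{k=0}^{K−1} [Δ·(w̄/λ) + ((1−α)/λ)·max(η_k − w̄/λ, 0)] ≤ w̄/λ + J/(λΔ) + max(η_0 − η_∞, 0)/(K λ Δ). -/

import Mathlib

/-- horizon-wide time-averaged bound. With `α = exp(-lam Δ)`,
`η_{k+1} ≤ α η_k + (w̄/lam)(1-α) + J`, and `η_∞ = w̄/lam + J/(1-α)`, the time average of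
the per-interval integral bounds satisfies
`(1/(KΔ)) ∑_{k<K} [Δ (w̄/lam) + ((1-α)/lam)(η_k - w̄/lam)₊]
  ≤ w̄/lam + J/(lam Δ) + (η_0 - η_∞)₊ / (K lam Δ)`. -/
theorem stmt19 (lam Δ wbar J : ℝ) (hlam : 0 < lam) (hΔ : 0 < Δ) (hw : 0 ≤ wbar)
    (hJ : 0 ≤ J) (K : ℕ) (hK : 1 ≤ K) (η : ℕ → ℝ) (hpos : ∀ k, 0 ≤ η k)
    (hrec : ∀ k, η (k + 1) ≤ Real.exp (-lam * Δ) * η k +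
      (wbar / lam) * (1 - Real.exp (-lam * Δ)) + J) :
    (1 / ((K : ℝ) * Δ)) * ∑ k ∈ Finset.range K,
        (Δ * (wbar / lam) +
          ((1 - Real.exp (-lam * Δ)) / lam) * max (η k - wbar / lam) 0) ≤
      wbar / lam + J / (lam * Δ) +
        max (η 0 - (wbar / lam + J / (1 - Real.exp (-lam * Δ)))) 0 / ((K : ℝ) * lam * Δ) := by
  set α := Real.exp (-lam * Δ) with hαdef
  have hα0 : 0 < α := Real.exp_pos _
  have hα1 : α < 1 := by
    rw [hαdef, Real.exp_lt_one_iff]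
    nlinarith
  have h1α : 0 < 1 - α := by linarith
  set c := wbar / lam with hc
  set b := J / (1 - α) with hbdef
  have hb : (1 - α) * b = J := by rw [hbdef]; field_simp [h1α.ne']
  have hb0 : 0 ≤ b := div_nonneg hJ h1α.le
  set ξ : ℕ → ℝ := fun k => max (η k - c) 0 with hξ
  set M := max (η 0 - (c + b)) 0 with hMdef
  have hM0 : 0 ≤ M := le_max_right _ _
  have hMξ : ξ 0 ≤ b + M := by
    have h1 := le_max_left (η 0 - (c + b)) 0
    have h2 := le_max_right (η 0 - (c + b)) 0
    apply max_le <;> linarith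
  have hstep : ∀ k, ξ (k + 1) ≤ α * ξ k + J := by
    intro k
    have h := hrec k
    have h1 := le_max_left (η k - c) 0
    have h2 := le_max_right (η k - c) 0
    have h3 : α * (η k - c) ≤ α * ξ k :=
      mul_le_mul_of_nonneg_left h1 hα0.le
    apply max_le
    · nlinarith
    · nlinarith
  have hgeo : ∀ k, ξ k ≤ b + α ^ k * M := by
    intro k
    induction k with
    | zero => simpa using hMξ
    | succ n ih =>
      have h1 : α * ξ n ≤ α * (b + α ^ n * M) :=
        mul_le_mul_of_nonneg_left ih hα0.le
      have h2 : α * (b + α ^ n * M) + J = b + α ^ (n + 1) * M := by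
        rw [← hb]; ring
      have := hstep n
      linarith
  have hK0 : (0 : ℝ) < (K : ℝ) := by exact_mod_cast Nat.lt_of_lt_of_le Nat.zero_lt_one hK
  have hgsum : ∑ k ∈ Finset.range K, α ^ k ≤ 1 / (1 - α) := by
    rw [geom_sum_eq (ne_of_lt hα1)]
    have heq : (α ^ K - 1) / (α - 1) = (1 - α ^ K) / (1 - α) := by
      rw [div_eq_div_iff (sub_ne_zero_of_ne (ne_of_lt hα1)) (ne_of_gt h1α)]
      ring
    rw [heq]
    have hp : 0 < α ^ K := pow_pos hα0 K
    gcongr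
    linarith
  have hsum : ∑ k ∈ Finset.range K, ξ k ≤ (K : ℝ) * b + M / (1 - α) := by
    calc ∑ k ∈ Finset.range K, ξ k ≤ ∑ k ∈ Finset.range K, (b + α ^ k * M) :=
          Finset.sum_le_sum fun k _ => hgeo k
      _ = (K : ℝ) * b + (∑ k ∈ Finset.range K, α ^ k) * M := by
          rw [Finset.sum_add_distrib, Finset.sum_const, ← Finset.sum_mul]
          simp [mul_comm]
      _ ≤ (K : ℝ) * b + (1 / (1 - α)) * M := by
          have := mul_le_mul_of_nonneg_right hgsum hM0
          linarith
      _ = (K : ℝ) * b + M / (1 - α) := by ring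
  have hsplit : ∑ k ∈ Finset.range K,
      (Δ * c + ((1 - α) / lam) * ξ k)
      = (K : ℝ) * (Δ * c) + ((1 - α) / lam) * ∑ k ∈ Finset.range K, ξ k := by
    rw [Finset.sum_add_distrib, Finset.sum_const, Finset.mul_sum]
    simp [mul_comm]
  rw [hsplit]
  have hT := hsum
  set T := ∑ k ∈ Finset.range K, ξ k with hTdef
  have hfin : (1 / ((K : ℝ) * Δ)) * ((K : ℝ) * (Δ * c) + ((1 - α) / lam) * ((K : ℝ) * b + M / (1 - α)))
      = c + J / (lam * Δ) + M / ((K : ℝ) * lam * Δ) := by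
    rw [← hb]
    field_simp
    ring
  have hmono : (1 / ((K : ℝ) * Δ)) * ((K : ℝ) * (Δ * c) + ((1 - α) / lam) * T)
      ≤ (1 / ((K : ℝ) * Δ)) * ((K : ℝ) * (Δ * c) + ((1 - α) / lam) * ((K : ℝ) * b + M / (1 - α))) := by
    apply mul_le_mul_of_nonneg_left _ (by positivity)
    have : 0 ≤ (1 - α) / lam := by positivity
    nlinarith
  calc (1 / ((K : ℝ) * Δ)) * ((K : ℝ) * (Δ * c) + ((1 - α) / lam) * T)
      ≤ _ := hmono
    _ = c + J / (lam * Δ) + M / ((K : ℝ) * lam * Δ) := hfin
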